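/- There exists an optimal solution of the max-min rate power allocation problem at which all users achieve the same rate. Precisely: let N ≥ 1 and for each n ∈ {1,…,N} let R_n : ℝ^N → ℝ be continuous on the power simplex Δ, satisfy R_n(p) = 0 whenever p_n = 0, be strictly increasing in its own coordinate p_n (if p and q agree in all coordinates except n and p_n < q_n, then R_n(p) < R_n(q)), and be nonincreasing in every other coordinate p_i, i ≠ n. Then there exists p* ∈ Δ such that min_n R_n(p*) = sup_{p ∈ Δ} min_n R_n(p) and R_1(p*) = R_2(p*) = ⋯ = R_N(p*). -/

import Mathlib

/-- There exists an optimal solution of the max-min rate power allocation problem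
at which all users achieve the same rate. -/
theorem stmt_0 (N : ℕ) (hN : 1 ≤ N)
    (R : Fin N → (Fin N → ℝ) → ℝ)
    (Δ : Set (Fin N → ℝ))
    (hΔ : Δ = {p : Fin N → ℝ | (∀ n, 0 ≤ p n) ∧ ∑ n, p n ≤ 1})
    (hcont : ∀ n, ContinuousOn (R n) Δ)
    (hzero : ∀ n, ∀ p ∈ Δ, p n = 0 → R n p = 0)
    (hmono : ∀ n, ∀ p ∈ Δ, ∀ q ∈ Δ,
      (∀ i, i ≠ n → p i = q i) → p n < q n → R n p < R n q)
    (hanti : ∀ n, ∀ i, i ≠ n → ∀ p ∈ Δ, ∀ q ∈ Δ,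
      (∀ j, j ≠ i → p j = q j) → p i ≤ q i → R n q ≤ R n p) :
    ∃ pstar ∈ Δ,
      ((⨅ n, R n pstar) = ⨆ p ∈ Δ, ⨅ n, R n p) ∧
      ∀ n m, R n pstar = R m pstar := by
  haveI : Nonempty (Fin N) := ⟨⟨0, hN⟩⟩
  set f : (Fin N → ℝ) → ℝ :=
    fun p => Finset.univ.inf' Finset.univ_nonempty (fun n => R n p) with hf_def
  have hf_eq : ∀ p, (⨅ n, R n p) = f p := fun p =>
    (Finset.inf'_univ_eq_ciInf (fun n => R n p)).symm
  have hf_le : ∀ p n, f p ≤ R n p := fun p n =>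
    Finset.inf'_le _ (Finset.mem_univ n)
  have hle_f : ∀ p c, (∀ n, c ≤ R n p) → c ≤ f p := fun p c h =>
    Finset.le_inf' _ _ (fun n _ => h n)
  -- Δ is compact
  have h0Δ : (0 : Fin N → ℝ) ∈ Δ := by
    rw [hΔ]; constructor
    · intro n; exact le_refl 0
    · simp
  have hΔsub : Δ ⊆ Set.Icc (0 : Fin N → ℝ) 1 := by
    rintro p hp
    rw [hΔ] at hp
    obtain ⟨hpos, hsum⟩ := hp
    refine ⟨fun n => hpos n, fun n => ?_⟩
    calc p n ≤ ∑ i, p i := Finset.single_le_sum (fun i _ => hpos i) (Finset.mem_univ n)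
      _ ≤ 1 := hsum
  have hΔclosed : IsClosed Δ := by
    rw [hΔ]
    have h1 : IsClosed {p : Fin N → ℝ | ∀ n, 0 ≤ p n} := by
      have : {p : Fin N → ℝ | ∀ n, 0 ≤ p n} = ⋂ n, {p | 0 ≤ p n} := by
        ext p; simp
      rw [this]
      exact isClosed_iInter fun n => isClosed_le continuous_const (continuous_apply n)
    have h2 : IsClosed {p : Fin N → ℝ | ∑ n, p n ≤ 1} :=
      isClosed_le (continuous_finset_sum _ (fun i _ => continuous_apply i)) continuous_const
    exact h1.inter h2
  have hΔcomp : IsCompact Δ :=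
    (isCompact_Icc (a := (0 : Fin N → ℝ)) (b := 1)).of_isClosed_subset hΔclosed hΔsub
  have hfcont : ContinuousOn f Δ :=
    ContinuousOn.finset_inf'_apply Finset.univ_nonempty (fun n _ => hcont n)
  -- extreme value theorem
  obtain ⟨p0, hp0Δ, hp0max⟩ := hΔcomp.exists_isMaxOn ⟨0, h0Δ⟩ hfcont
  set V : ℝ := f p0 with hV_def
  have hmaxV : ∀ p ∈ Δ, f p ≤ V := fun p hp => hp0max hp
  -- V is positive
  have hVpos : 0 < V := by
    set u : Fin N → ℝ := fun _ => (N : ℝ)⁻¹ with hu_def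
    have hNpos : (0 : ℝ) < (N : ℝ) := by positivity
    have hNinv : (0 : ℝ) < (N : ℝ)⁻¹ := by positivity
    have huΔ : u ∈ Δ := by
      rw [hΔ]
      refine ⟨fun n => hNinv.le, ?_⟩
      simp [hu_def, Finset.sum_const, Finset.card_univ]
      rw [mul_inv_cancel₀ (ne_of_gt hNpos)]
    have hfu : 0 < f u := by
      rw [hf_def]
      rw [Finset.lt_inf'_iff]
      intro n _
      set u' : Fin N → ℝ := Function.update u n 0 with hu'_def
      have hu'Δ : u' ∈ Δ := by
        rw [hΔ]
        constructor
        · intro i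
          rcases eq_or_ne i n with rfl | h
          · simp [hu'_def]
          · simp [hu'_def, Function.update_of_ne h]; exact hNinv.le
        · have hsum : ∑ i, u' i ≤ ∑ i, u i := by
            apply Finset.sum_le_sum
            intro i _
            rcases eq_or_ne i n with rfl | h
            · simp [hu'_def]; exact hNinv.le
            · simp [hu'_def, Function.update_of_ne h]
          have : ∑ i, u i ≤ 1 := by
            rw [hΔ] at huΔ; exact huΔ.2
          linarith
      have hz : R n u' = 0 := hzero n u' hu'Δ (by simp [hu'_def])
      have : R n u' < R n u := by
        apply hmono n u' hu'Δ u huΔ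
        · intro i hi; simp [hu'_def, Function.update_of_ne hi]
        · simp [hu'_def]; exact hNinv
      linarith
    exact lt_of_lt_of_le hfu (hmaxV u huΔ)
  -- the set of maximizers is compact
  set A : Set (Fin N → ℝ) := Δ ∩ f ⁻¹' {V} with hA_def
  have hAcomp : IsCompact A := by
    apply hΔcomp.of_isClosed_subset
    · exact hfcont.preimage_isClosed_of_isClosed hΔclosed isClosed_singleton
    · exact Set.inter_subset_left
  have hp0A : p0 ∈ A := ⟨hp0Δ, rfl⟩
  -- minimize the total power over the set of maximizers
  obtain ⟨ps, hpsA, hpsmin⟩ := hAcomp.exists_isMinOn ⟨p0, hp0A⟩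
    ((continuous_finset_sum _ (fun i _ => continuous_apply i)).continuousOn :
      ContinuousOn (fun p : Fin N → ℝ => ∑ i, p i) A)
  obtain ⟨hpsΔ, hpsV⟩ := hpsA
  have hpsV : f ps = V := hpsV
  -- all rates are equal to V at ps
  have hall : ∀ n, R n ps = V := by
    by_contra hne
    push_neg at hne
    obtain ⟨m, hm⟩ := hne
    have hmV : V < R m ps := lt_of_le_of_ne (hpsV ▸ hf_le ps m) (Ne.symm hm)
    have hΔps : (∀ n, 0 ≤ ps n) ∧ ∑ n, ps n ≤ 1 := by
      rw [hΔ] at hpsΔ; exact hpsΔ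
    have hpm : 0 < ps m := by
      rcases lt_or_eq_of_le (hΔps.1 m) with h | h
      · exact h
      · exfalso
        have : R m ps = 0 := hzero m ps hpsΔ h.symm
        linarith
    -- decrease user m's power slightly
    set g : ℝ → ℝ := fun t => R m (Function.update ps m t) with hg_def
    have hupdΔ : ∀ t ∈ Set.Ico (0 : ℝ) (ps m), Function.update ps m t ∈ Δ := by
      intro t ht
      rw [hΔ]
      constructor
      · intro i
        rcases eq_or_ne i m with rfl | h
        · simpa using ht.1
        · simpa [Function.update_of_ne h] using hΔps.1 i
      · have h1 : ∑ i, Function.update ps m t i ≤ ∑ i, ps i := by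
          apply Finset.sum_le_sum
          intro i _
          rcases eq_or_ne i m with rfl | h
          · simpa using ht.2.le
          · simp [Function.update_of_ne h]
        exact h1.trans hΔps.2
    have hL : Filter.NeBot (nhdsWithin (ps m) (Set.Ico 0 (ps m))) := by
      rw [← mem_closure_iff_nhdsWithin_neBot, closure_Ico (ne_of_lt hpm)]
      exact ⟨hpm.le, le_refl _⟩
    have hgx : g (ps m) = R m ps := by rw [hg_def]; simp
    have hgcont : ContinuousWithinAt g (Set.Ico 0 (ps m)) (ps m) := by
      apply ContinuousWithinAt.comp (t := Δ)
      · rw [Function.update_eq_self]; exact hcont m ps hpsΔ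
      · exact (continuous_const.update m continuous_id).continuousWithinAt
      · intro t ht; exact hupdΔ t ht
    have hev : ∀ᶠ t in nhdsWithin (ps m) (Set.Ico 0 (ps m)), V < g t := by
      have : Set.Ioi V ∈ nhds (g (ps m)) := Ioi_mem_nhds (by rw [hgx]; exact hmV)
      exact hgcont this
    obtain ⟨t, htV, htIco⟩ := (hev.and self_mem_nhdsWithin).exists
    set q : Fin N → ℝ := Function.update ps m t with hq_def
    have hqΔ : q ∈ Δ := hupdΔ t htIco
    have hqA : q ∈ A := by
      refine ⟨hqΔ, ?_⟩
      have h1 : V ≤ f q := by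
        apply hle_f
        intro n
        rcases eq_or_ne n m with rfl | h
        · exact htV.le
        · have : R n ps ≤ R n q := by
            apply hanti n m (Ne.symm h) q hqΔ ps hpsΔ
            · intro j hj; simp [hq_def, Function.update_of_ne hj]
            · simp [hq_def]; exact htIco.2.le
          calc V = f ps := hpsV.symm
            _ ≤ R n ps := hf_le ps n
            _ ≤ R n q := this
      have h2 : f q ≤ V := hmaxV q hqΔ
      exact le_antisymm h2 h1
    have hsumlt : ∑ i, q i < ∑ i, ps i := by
      have h1 : ∑ i, q i = t + ∑ i ∈ Finset.univ \ {m}, ps i := by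
        rw [hq_def, Finset.sum_update_of_mem (Finset.mem_univ m)]
      have h2 : ∑ i, ps i = ps m + ∑ i ∈ Finset.univ \ {m}, ps i := by
        conv_lhs => rw [← Function.update_eq_self m ps]
        rw [Finset.sum_update_of_mem (Finset.mem_univ m)]
      rw [h1, h2]
      exact add_lt_add_of_lt_of_le htIco.2 le_rfl
    have := hpsmin hqA
    simp only [Set.mem_setOf_eq] at this
    linarith
  -- conclude
  refine ⟨ps, hpsΔ, ?_, ?_⟩
  · -- the sup equality
    rw [hf_eq ps, hpsV]
    have hbd : ∀ p : Fin N → ℝ, (⨆ _ : p ∈ Δ, ⨅ n, R n p) ≤ V := by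
      intro p
      by_cases hp : p ∈ Δ
      · rw [ciSup_pos hp, hf_eq p]
        exact hmaxV p hp
      · haveI : IsEmpty (p ∈ Δ) := ⟨hp⟩
        rw [Real.iSup_of_isEmpty]
        exact hVpos.le
    apply le_antisymm
    · have h1 : V = ⨆ _ : ps ∈ Δ, ⨅ n, R n ps := by
        rw [ciSup_pos hpsΔ, hf_eq ps, hpsV]
      rw [h1]
      exact le_ciSup ⟨V, Set.forall_mem_range.mpr hbd⟩ ps
    · exact ciSup_le hbd
  · intro n m
    rw [hall n, hall m]
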